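/- Let F : ℝ → ℝ be twice continuously differentiable and define H : ℝ → ℝ by H(t) = t·F′(t). Then for every z, u ∈ ℂ, the real Fréchet derivative of the map w ↦ H(|w|²) at z, evaluated in the direction u, equals −ω_F(z)(iz, u); explicitly, fderiv_ℝ (w ↦ H(|w|²))(z)(u) = 2·(F″(|z|²)·|z|² + F′(|z|²))·Re(z̄·u) = −ω_F(z)(iz, u). In other words, φ(z) = H(|z|²) is a moment map for the standard rotation action of S¹ on (ℂ, ω_F), whose infinitesimal generator is the vector field X(z) = iz. -/

import Mathlib

/-- Lemma 3.1(2) of "Kähler cuts": `φ(z) = H(|z|²)`, `H(t) = t·F'(t)`, is a moment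
map for the standard rotation action of `S¹` on `(ℂ, ω_F)`, whose infinitesimal
generator is `X(z) = iz`.  Explicitly, the real Fréchet derivative of `w ↦ H(|w|²)`
at `z` in the direction `u` equals `2(F''(|z|²)|z|² + F'(|z|²))·Re(z̄·u)`, which is
`-ω_F(z)(iz, u)`, where `ω_F(z)(u,v) = 2(F''(|z|²)|z|² + F'(|z|²))(Re u · Im v - Im u · Re v)`. -/
theorem stmt_2 (F H : ℝ → ℝ) (hF : ContDiff ℝ 2 F)
    (hH : ∀ t : ℝ, H t = t * deriv F t)
    (ω : ℂ → ℂ → ℂ → ℝ)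
    (hω : ∀ z u v : ℂ, ω z u v =
      2 * (deriv (deriv F) (‖z‖ ^ 2) * ‖z‖ ^ 2 + deriv F (‖z‖ ^ 2)) *
        (u.re * v.im - u.im * v.re))
    (z u : ℂ) :
    fderiv ℝ (fun w : ℂ => H (‖w‖ ^ 2)) z u =
        2 * (deriv (deriv F) (‖z‖ ^ 2) * ‖z‖ ^ 2 + deriv F (‖z‖ ^ 2)) *
          ((starRingEnd ℂ) z * u).re ∧
      fderiv ℝ (fun w : ℂ => H (‖w‖ ^ 2)) z u = -ω z (Complex.I * z) u := by
  have hF' : ContDiff ℝ 1 (deriv F) := by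
    have := (contDiff_succ_iff_deriv (n := 1)).mp (by exact_mod_cast hF)
    exact this.2.2
  have hHdiff : ∀ t : ℝ, HasDerivAt H (deriv F t + t * deriv (deriv F) t) t := by
    intro t
    have h1 : HasDerivAt (fun s : ℝ => s * deriv F s)
        (1 * deriv F t + t * deriv (deriv F) t) t :=
      (hasDerivAt_id t).mul ((hF'.differentiable one_ne_zero t).hasDerivAt)
    rw [one_mul] at h1
    exact h1.congr_of_eventuallyEq (Filter.Eventually.of_forall fun s => (hH s))
  have hq : HasFDerivAt (fun w : ℂ => ‖w‖ ^ 2) (2 • (innerSL ℝ z)) z := by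
    simpa using (hasFDerivAt_id z).norm_sq
  have hcomp := ((hHdiff (‖z‖ ^ 2)).hasFDerivAt).comp z hq
  have hfd := (hcomp : HasFDerivAt (fun w : ℂ => H (‖w‖ ^ 2)) _ z).fderiv
  have happ : fderiv ℝ (fun w : ℂ => H (‖w‖ ^ 2)) z u =
      (deriv F (‖z‖ ^ 2) + ‖z‖ ^ 2 * deriv (deriv F) (‖z‖ ^ 2)) *
        (2 * (z.re * u.re + z.im * u.im)) := by
    rw [show (fun w : ℂ => H (‖w‖ ^ 2)) = H ∘ (fun w : ℂ => ‖w‖ ^ 2) from rfl, hfd]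
    simp [ContinuousLinearMap.comp_apply, Complex.inner, Complex.mul_re, two_smul]
    ring
  constructor
  · rw [happ, Complex.mul_re]
    simp [Complex.conj_re, Complex.conj_im]
    ring
  · rw [happ, hω]
    simp [Complex.mul_re, Complex.mul_im, Complex.I_re, Complex.I_im]
    ring
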